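/- arXiv:1311.5152 — 7 statements merged into one kernel-verified Lean document; each statement's English description precedes it below -/
import Mathlib

section
/- Let v, w ∈ ℝ³ with ‖v‖ = ‖w‖ = 1 and v ≠ w, and set p = (v × w)/‖v − w‖ and q = (v − w)/‖v − w‖. Then ‖q‖ = 1, ⟨p, q⟩ = 0, ‖p‖ = ‖v + w‖/2 < 1, and ⟨p × q, e₁⟩ = ((v + w)·e₁)/2, where e₁ = (1,0,0). -/
open scoped RealInnerProductSpace

/-- The cross product on `ℝ³`, viewed as `EuclideanSpace ℝ (Fin 3)`. -/
noncomputable def cross (v w : EuclideanSpace ℝ (Fin 3)) : EuclideanSpace ℝ (Fin 3) :=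
  WithLp.toLp 2 ![v 1 * w 2 - v 2 * w 1, v 2 * w 0 - v 0 * w 2, v 0 * w 1 - v 1 * w 0]

/-- The first standard basis vector `e₁ = (1,0,0)` of `ℝ³`. -/
noncomputable def e₁ : EuclideanSpace ℝ (Fin 3) := WithLp.toLp 2 (![1, 0, 0] : Fin 3 → ℝ)

/-- For distinct unit vectors `v, w ∈ ℝ³`, setting `p = (v × w)/‖v − w‖` and
`q = (v − w)/‖v − w‖`, one has `‖q‖ = 1`, `⟨p, q⟩ = 0`, `‖p‖ = ‖v + w‖/2 < 1`, and
`⟨p × q, e₁⟩ = ((v + w)·e₁)/2`. -/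
theorem phi_two_well_defined (v w : EuclideanSpace ℝ (Fin 3))
    (hv : ‖v‖ = 1) (hw : ‖w‖ = 1) (hvw : v ≠ w) :
    ‖(‖v - w‖)⁻¹ • (v - w)‖ = 1 ∧
    ⟪(‖v - w‖)⁻¹ • cross v w, (‖v - w‖)⁻¹ • (v - w)⟫ = 0 ∧
    ‖(‖v - w‖)⁻¹ • cross v w‖ = ‖v + w‖ / 2 ∧
    ‖(‖v - w‖)⁻¹ • cross v w‖ < 1 ∧
    ⟪cross ((‖v - w‖)⁻¹ • cross v w) ((‖v - w‖)⁻¹ • (v - w)), e₁⟫ = ⟪v + w, e₁⟫ / 2 := by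
  have hd : 0 < ‖v - w‖ := by
    rw [norm_pos_iff]; exact sub_ne_zero.mpr hvw
  have hv2 : v 0 ^ 2 + v 1 ^ 2 + v 2 ^ 2 = 1 := by
    have h := congrArg (· ^ 2) hv
    simp only [EuclideanSpace.norm_eq, Fin.sum_univ_three, Real.norm_eq_abs, sq_abs,
      one_pow] at h
    rw [Real.sq_sqrt (by positivity)] at h
    linarith
  have hw2 : w 0 ^ 2 + w 1 ^ 2 + w 2 ^ 2 = 1 := by
    have h := congrArg (· ^ 2) hw
    simp only [EuclideanSpace.norm_eq, Fin.sum_univ_three, Real.norm_eq_abs, sq_abs,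
      one_pow] at h
    rw [Real.sq_sqrt (by positivity)] at h
    linarith
  set t : ℝ := ⟪v, w⟫ with htdef
  have ht : t = v 0 * w 0 + v 1 * w 1 + v 2 * w 2 := by
    simp [htdef, PiLp.inner_apply, Fin.sum_univ_three, RCLike.inner_apply]
    ring
  have hd2 : ‖v - w‖ ^ 2 = 2 - 2 * t := by
    rw [norm_sub_sq_real, hv, hw]; ring
  have hp2 : ‖v + w‖ ^ 2 = 2 + 2 * t := by
    rw [norm_add_sq_real, hv, hw]; ring
  have ht1 : t < 1 := by nlinarith [hd, hd.le]
  have hc2 : ‖cross v w‖ ^ 2 = 1 - t ^ 2 := by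
    have h : ‖cross v w‖ ^ 2 = (v 1 * w 2 - v 2 * w 1) ^ 2 + (v 2 * w 0 - v 0 * w 2) ^ 2
        + (v 0 * w 1 - v 1 * w 0) ^ 2 := by
      rw [EuclideanSpace.norm_eq]
      rw [Real.sq_sqrt (by positivity)]
      simp [cross, Fin.sum_univ_three, Real.norm_eq_abs, sq_abs]
    rw [h, ht]
    linear_combination (w 0 ^ 2 + w 1 ^ 2 + w 2 ^ 2) * hv2 + hw2
  have hcn : ‖cross v w‖ = ‖v - w‖ * ‖v + w‖ / 2 := by
    have h1 : 0 ≤ ‖cross v w‖ := norm_nonneg _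
    have h2 : (0:ℝ) ≤ ‖v - w‖ * ‖v + w‖ / 2 := by positivity
    have hsq : ‖cross v w‖ ^ 2 = (‖v - w‖ * ‖v + w‖ / 2) ^ 2 := by
      rw [hc2]
      linear_combination (-(‖v + w‖ ^ 2) / 4) * hd2 + (-(2 - 2 * t) / 4) * hp2
    rw [← Real.sqrt_sq h1, ← Real.sqrt_sq h2, hsq]
  refine ⟨?_, ?_, ?_, ?_, ?_⟩
  · rw [norm_smul, Real.norm_eq_abs, abs_inv, abs_of_pos hd, inv_mul_cancel₀ hd.ne']
  · rw [real_inner_smul_left, real_inner_smul_right]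
    have : ⟪cross v w, v - w⟫ = 0 := by
      simp only [PiLp.inner_apply, Fin.sum_univ_three, RCLike.inner_apply, conj_trivial,
        PiLp.sub_apply, cross]
      simp [Matrix.cons_val_zero, Matrix.cons_val_one, Matrix.head_cons]
      ring
    rw [this]; ring
  · rw [norm_smul, Real.norm_eq_abs, abs_inv, abs_of_pos hd, hcn]
    field_simp
  · rw [norm_smul, Real.norm_eq_abs, abs_inv, abs_of_pos hd, hcn]
    rw [inv_mul_eq_div]
    rw [div_lt_one hd]
    have hpn : 0 ≤ ‖v + w‖ := norm_nonneg _
    nlinarith [hd2, hp2, hd]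
  · simp only [PiLp.inner_apply, Fin.sum_univ_three, RCLike.inner_apply, conj_trivial,
      PiLp.sub_apply, PiLp.smul_apply, PiLp.add_apply, cross, e₁, smul_eq_mul]
    simp only [Matrix.cons_val_zero, Matrix.cons_val_one, Matrix.head_cons, Matrix.cons_val_two,
      Matrix.tail_cons]
    have hdd : ‖v - w‖ ≠ 0 := hd.ne'
    field_simp
    have hmul : ‖v - w‖ * ‖v - w‖ = 2 - 2 * (v 0 * w 0 + v 1 * w 1 + v 2 * w 2) := by
      rw [ht] at hd2; nlinarith [hd2]
    linear_combination (2 * w 0) * hv2 + (2 * v 0) * hw2 - (v 0 + w 0) * hmul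
end

section
/- Let p, q ∈ ℝ³ satisfy ‖q‖ = 1, ⟨p, q⟩ = 0 and ‖p‖ < 1, and define v = √(1 − ‖p‖²)·q − q × p and w = −√(1 − ‖p‖²)·q − q × p. Then ‖v‖ = ‖w‖ = 1, v ≠ w, (v × w)/‖v − w‖ = p, and (v − w)/‖v − w‖ = q. -/
open scoped RealInnerProductSpace

/-- The explicit inverse formula of Lemma 2.3: if `p, q ∈ ℝ³` satisfy `‖q‖ = 1`,
`⟨p, q⟩ = 0` and `‖p‖ < 1`, then `v = √(1 − ‖p‖²)·q − q × p` and
`w = −√(1 − ‖p‖²)·q − q × p` are distinct unit vectors with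
`(v × w)/‖v − w‖ = p` and `(v − w)/‖v − w‖ = q`. -/
theorem phi_two_inverse (p q : EuclideanSpace ℝ (Fin 3))
    (hq : ‖q‖ = 1) (hpq : ⟪p, q⟫ = 0) (hp : ‖p‖ < 1)
    (v w : EuclideanSpace ℝ (Fin 3))
    (hv : v = Real.sqrt (1 - ‖p‖ ^ 2) • q - cross q p)
    (hw : w = -(Real.sqrt (1 - ‖p‖ ^ 2)) • q - cross q p) :
    ‖v‖ = 1 ∧ ‖w‖ = 1 ∧ v ≠ w ∧
    (‖v - w‖)⁻¹ • cross v w = p ∧ (‖v - w‖)⁻¹ • (v - w) = q := by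
  set s := Real.sqrt (1 - ‖p‖ ^ 2) with hs
  have hp0 : (0:ℝ) ≤ ‖p‖ := norm_nonneg p
  have hpos : (0:ℝ) < 1 - ‖p‖ ^ 2 := by nlinarith
  have hs0 : 0 < s := Real.sqrt_pos.mpr hpos
  have normsq : ∀ x : EuclideanSpace ℝ (Fin 3), ‖x‖ ^ 2 = x 0 ^ 2 + x 1 ^ 2 + x 2 ^ 2 := by
    intro x
    rw [EuclideanSpace.norm_eq, Real.sq_sqrt (by positivity)]
    simp [Fin.sum_univ_three, sq_abs]
  have hq' : q 0 ^ 2 + q 1 ^ 2 + q 2 ^ 2 = 1 := by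
    rw [← normsq q, hq]; norm_num
  have hs2 : s ^ 2 = 1 - (p 0 ^ 2 + p 1 ^ 2 + p 2 ^ 2) := by
    rw [Real.sq_sqrt hpos.le, normsq]
  have hpq' : p 0 * q 0 + p 1 * q 1 + p 2 * q 2 = 0 := by
    simp [PiLp.inner_apply, Fin.sum_univ_three, RCLike.inner_apply] at hpq; linarith
  have hv0 : v 0 = s * q 0 - (q 1 * p 2 - q 2 * p 1) := by simp [hv, cross]
  have hv1 : v 1 = s * q 1 - (q 2 * p 0 - q 0 * p 2) := by simp [hv, cross]
  have hv2 : v 2 = s * q 2 - (q 0 * p 1 - q 1 * p 0) := by simp [hv, cross]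
  have hw0 : w 0 = -s * q 0 - (q 1 * p 2 - q 2 * p 1) := by simp [hw, cross]
  have hw1 : w 1 = -s * q 1 - (q 2 * p 0 - q 0 * p 2) := by simp [hw, cross]
  have hw2 : w 2 = -s * q 2 - (q 0 * p 1 - q 1 * p 0) := by simp [hw, cross]
  have hvw : v - w = (2 * s) • q := by
    rw [hv, hw]; module
  have hnvw : ‖v - w‖ = 2 * s := by
    rw [hvw, norm_smul, hq, Real.norm_eq_abs, abs_of_pos (by linarith), mul_one]
  have hnv : ‖v‖ = 1 := by
    have h : ‖v‖ ^ 2 = 1 := by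
      rw [normsq, hv0, hv1, hv2]
      linear_combination (q 0^2 + q 1^2 + q 2^2) * hs2 + hq'
        - (p 0 * q 0 + p 1 * q 1 + p 2 * q 2) * hpq'
    rw [← Real.sqrt_sq (norm_nonneg v), h, Real.sqrt_one]
  have hnw : ‖w‖ = 1 := by
    have h : ‖w‖ ^ 2 = 1 := by
      rw [normsq, hw0, hw1, hw2]
      linear_combination (q 0^2 + q 1^2 + q 2^2) * hs2 + hq'
        - (p 0 * q 0 + p 1 * q 1 + p 2 * q 2) * hpq'
    rw [← Real.sqrt_sq (norm_nonneg w), h, Real.sqrt_one]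
  have hne : v ≠ w := by
    intro h
    have h0 : (2 * s) • q = 0 := by rw [← hvw, h, sub_self]
    have hq0 : q ≠ 0 := by intro h0; rw [h0] at hq; simp at hq
    rcases smul_eq_zero.mp h0 with h1 | h1
    · linarith
    · exact hq0 h1
  have hc0 : cross v w 0 = 2 * s * p 0 := by
    simp only [cross, PiLp.toLp_apply, Matrix.cons_val_zero, hv1, hv2, hw1, hw2]
    linear_combination (2 * s * p 0) * hq' - (2 * s * q 0) * hpq'
  have hc1 : cross v w 1 = 2 * s * p 1 := by
    simp only [cross, PiLp.toLp_apply, Matrix.cons_val_one, Matrix.head_cons, Matrix.cons_val_zero, hv0, hv2, hw0, hw2]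
    linear_combination (2 * s * p 1) * hq' - (2 * s * q 1) * hpq'
  have hc2 : cross v w 2 = 2 * s * p 2 := by
    simp only [cross, PiLp.toLp_apply, Matrix.cons_val_two, Matrix.tail_cons, Matrix.head_cons,
      hv0, hv1, hw0, hw1]
    linear_combination (2 * s * p 2) * hq' - (2 * s * q 2) * hpq'
  have hcross : cross v w = (2 * s) • p := by
    ext i
    fin_cases i
    · show cross v w 0 = ((2 * s) • p) 0
      rw [hc0]; simp
    · show cross v w 1 = ((2 * s) • p) 1
      rw [hc1]; simp
    · show cross v w 2 = ((2 * s) • p) 2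
      rw [hc2]; simp
  refine ⟨hnv, hnw, hne, ?_, ?_⟩
  · rw [hnvw, hcross, smul_smul, inv_mul_cancel₀ (by positivity), one_smul]
  · rw [hnvw, hvw, smul_smul, inv_mul_cancel₀ (by positivity), one_smul]
end

section
/- For every α with 0 < α < 1, the 2-dimensional Lebesgue measure of the set {w ∈ ℂ : Im(w) > 0, |w| < √2, |w² + 2 − |w|²|² < 4(1 − α²)} equals π(1 − α). (Writing w = x + iy, the defining inequality is equivalent to (1 − y²)² + x²y² < 1 − α².) -/
open scoped Real
open MeasureTheory Set

set_option maxHeartbeats 1600000 in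
lemma key_integral (α β : ℝ) (hα0 : 0 < α) (hα1 : α < 1) (hβ : β = Real.sqrt (1 - α^2)) :
    ∫ y in Real.sqrt (1-β)..Real.sqrt (1+β),
      2 * (Real.sqrt (β^2 - (y^2-1)^2) / y) = π * (1 - α) := by
  have hα2 : (0:ℝ) < 1 - α^2 := by nlinarith
  have hβ2 : β^2 = 1 - α^2 := by rw [hβ, Real.sq_sqrt hα2.le]
  have hβpos : 0 < β := by rw [hβ]; positivity
  have hβ1 : β < 1 := by nlinarith
  set a := Real.sqrt (1-β) with ha
  set b := Real.sqrt (1+β) with hb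
  have ha2 : a^2 = 1 - β := Real.sq_sqrt (by linarith)
  have hb2 : b^2 = 1 + β := Real.sq_sqrt (by linarith)
  have hapos : 0 < a := Real.sqrt_pos.2 (by linarith)
  have hbpos : 0 < b := Real.sqrt_pos.2 (by linarith)
  have hab : a ≤ b := Real.sqrt_le_sqrt (by linarith)
  set G : ℝ → ℝ := fun y => Real.sqrt (β^2 - (y^2-1)^2) + Real.arcsin ((y^2-1)/β)
      - α * Real.arcsin ((β^2 + y^2 - 1)/(β*y^2)) with hG
  have hcont : ContinuousOn G (Set.Icc a b) := by
    apply ContinuousOn.sub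
    · apply ContinuousOn.add
      · exact ContinuousOn.sqrt (by fun_prop)
      · exact Real.continuous_arcsin.comp_continuousOn (by fun_prop)
    · apply ContinuousOn.mul continuousOn_const
      apply Real.continuous_arcsin.comp_continuousOn
      apply ContinuousOn.div (by fun_prop) (by fun_prop)
      intro y hy
      have : 0 < y := lt_of_lt_of_le hapos hy.1
      positivity
  have hderiv : ∀ y ∈ Set.Ioo a b, HasDerivAt G (2 * (Real.sqrt (β^2 - (y^2-1)^2) / y)) y := by
    intro y hy
    have hya : a < y := hy.1
    have hyb : y < b := hy.2
    have hypos : 0 < y := lt_trans hapos hya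
    have hy2a : 1 - β < y^2 := by nlinarith [ha2, hya, hapos]
    have hy2b : y^2 < 1 + β := by nlinarith [hb2, hyb, hypos]
    set D := β^2 - (y^2-1)^2 with hD
    have hDpos : 0 < D := by rw [hD]; nlinarith
    set sD := Real.sqrt D with hsD
    have hsDpos : 0 < sD := Real.sqrt_pos.2 hDpos
    have hsD2 : sD^2 = D := Real.sq_sqrt hDpos.le
    have hβy : (β*y^2 : ℝ) ≠ 0 := by positivity
    have h_inner : HasDerivAt (fun y : ℝ => y^2 - 1) (2*y) y := by
      simpa using (hasDerivAt_pow 2 y).sub_const 1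
    -- first term
    have h1 : HasDerivAt (fun y => Real.sqrt (β^2 - (y^2-1)^2))
        ((-(2*(y^2-1)^1*(2*y))) / (2*sD)) y := by
      have hin : HasDerivAt (fun y : ℝ => β^2 - (y^2-1)^2) (-(2*(y^2-1)^1*(2*y))) y := by
        simpa using (HasDerivAt.const_sub (β^2) (h_inner.pow 2))
      exact hin.sqrt hDpos.ne'
    -- second term
    have ht1 : (-1 : ℝ) < (y^2-1)/β := by rw [lt_div_iff₀ hβpos]; nlinarith
    have ht2 : (y^2-1)/β < 1 := by rw [div_lt_one hβpos]; nlinarith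
    have hsqrt_t : Real.sqrt (1 - ((y^2-1)/β)^2) = sD / β := by
      have h : 1 - ((y^2-1)/β)^2 = (sD/β)^2 := by
        rw [div_pow, div_pow, hsD2, hD]; field_simp
      rw [h, Real.sqrt_sq (by positivity)]
    have h2 : HasDerivAt (fun y => Real.arcsin ((y^2-1)/β))
        (1 / Real.sqrt (1 - ((y^2-1)/β)^2) * (2*y/β)) y :=
      by have := (Real.hasDerivAt_arcsin ht1.ne' ht2.ne).comp y (h_inner.div_const β); exact this
    -- third term
    have hc : (β^2+y^2-1)/(β*y^2) * (β*y^2) = β^2+y^2-1 := div_mul_cancel₀ _ hβy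
    have hs_id : β^2*y^4*(1 - ((β^2+y^2-1)/(β*y^2))^2) = α^2 * D := by
      rw [hD]
      linear_combination (-(β^2 - (y^2-1)^2)) * hβ2 +
        (-(β^2+y^2-1 + (β^2+y^2-1)/(β*y^2) * (β*y^2))) * hc
    have hPpos : (0:ℝ) < β^2*y^4 := by positivity
    have hs_lt : ((β^2+y^2-1)/(β*y^2))^2 < 1 := by
      have h1 : 0 < β^2*y^4*(1 - ((β^2+y^2-1)/(β*y^2))^2) := by
        rw [hs_id]; exact mul_pos (pow_pos hα0 2) hDpos
      nlinarith [h1, hPpos]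
    have hs1 : -1 < (β^2+y^2-1)/(β*y^2) := by
      nlinarith [hs_lt, sq_nonneg ((β^2+y^2-1)/(β*y^2) + 1)]
    have hs2 : (β^2+y^2-1)/(β*y^2) < 1 := by
      nlinarith [hs_lt, sq_nonneg ((β^2+y^2-1)/(β*y^2) - 1)]
    have hsqrt_s : Real.sqrt (1 - ((β^2+y^2-1)/(β*y^2))^2) = α * sD / (β * y^2) := by
      have e : (α * sD / (β * y^2))^2 = α^2 * D / (β^2*y^4) := by
        rw [div_pow, mul_pow, hsD2]; ring
      have h : 1 - ((β^2+y^2-1)/(β*y^2))^2 = (α * sD / (β * y^2))^2 := by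
        rw [e, eq_div_iff (by positivity : (β^2*y^4:ℝ) ≠ 0)]
        linear_combination hs_id
      rw [h, Real.sqrt_sq (by positivity)]
    have hinner3 : HasDerivAt (fun y : ℝ => (β^2+y^2-1)/(β*y^2))
        ((2*y*(β*y^2) - (β^2+y^2-1)*(β*(2*y)))/(β*y^2)^2) y := by
      have hnum : HasDerivAt (fun y : ℝ => β^2+y^2-1) (2*y) y := by
        simpa using ((hasDerivAt_pow 2 y).const_add (β^2)).sub_const 1
      have hden : HasDerivAt (fun y : ℝ => β*y^2) (β*(2*y)) y := by
        simpa using (hasDerivAt_pow 2 y).const_mul β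
      exact hnum.div hden hβy
    have h3 : HasDerivAt (fun y => Real.arcsin ((β^2+y^2-1)/(β*y^2)))
        (1 / Real.sqrt (1 - ((β^2+y^2-1)/(β*y^2))^2) *
          ((2*y*(β*y^2) - (β^2+y^2-1)*(β*(2*y)))/(β*y^2)^2)) y :=
      by have := (Real.hasDerivAt_arcsin hs1.ne' hs2.ne).comp y hinner3; exact this
    have htotal := (h1.add h2).sub (h3.const_mul α)
    convert htotal using 1
    case e'_4 => rfl
    case e'_5 => rfl
    case e'_8 => rfl
    rw [hsqrt_t, hsqrt_s]
    have hnum3 : 2*y*(β*y^2) - (β^2+y^2-1)*(β*(2*y)) = 2*β*y*α^2 := by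
      linear_combination (-2*β*y) * hβ2
    rw [hnum3]
    have e1 : -(2*(y^2-1)^1*(2*y))/(2*sD) = -(2*y*(y^2-1))/sD := by
      rw [pow_one, div_eq_div_iff (by positivity) hsDpos.ne']; ring
    have e2 : 1/(sD/β)*(2*y/β) = 2*y/sD := by
      field_simp
    have e3 : α * (1/(α*sD/(β*y^2)) * (2*β*y*α^2/(β*y^2)^2)) = 2*α^2/(y*sD) := by
      rw [one_div_div]
      field_simp
    rw [e1, e2, e3]
    field_simp
    linear_combination hsD2 + hβ2
  have hint : IntervalIntegrable (fun y => 2 * (Real.sqrt (β^2 - (y^2-1)^2) / y)) volume a b := by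
    apply ContinuousOn.intervalIntegrable
    rw [Set.uIcc_of_le hab]
    apply ContinuousOn.mul continuousOn_const
    apply ContinuousOn.div (ContinuousOn.sqrt (by fun_prop)) (by fun_prop)
    intro y hy; exact (lt_of_lt_of_le hapos hy.1).ne'
  rw [intervalIntegral.integral_eq_sub_of_hasDerivAt_of_le hab hcont hderiv hint]
  have hGb : G b = 0 + π/2 - α*(π/2) := by
    simp only [hG]
    rw [hb2, show (1+β-1:ℝ) = β by ring]
    rw [show β^2 - β^2 = (0:ℝ) by ring, Real.sqrt_zero, div_self hβpos.ne', Real.arcsin_one]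
    rw [show (β^2+(1+β)-1:ℝ) = β*(1+β) by ring, div_self (mul_pos hβpos (by linarith : (0:ℝ) < 1+β)).ne',
      Real.arcsin_one]
  have hGa : G a = 0 + (-(π/2)) - α*(-(π/2)) := by
    simp only [hG]
    rw [ha2, show (1-β-1:ℝ) = -β by ring]
    rw [show β^2 - (-β)^2 = (0:ℝ) by ring, Real.sqrt_zero]
    rw [show (-β/β : ℝ) = -1 by field_simp, Real.arcsin_neg_one]
    rw [show (β^2+(1-β)-1:ℝ) = -(β*(1-β)) by ring, neg_div,
      div_self (mul_pos hβpos (by linarith : (0:ℝ) < 1-β)).ne', Real.arcsin_neg_one]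
  rw [hGb, hGa]
  ring

set_option maxHeartbeats 1600000 in
/-- Lemma 3.5: for `0 < α < 1`, the Lebesgue area of the region
`{w ∈ ℂ : Im w > 0, |w| < √2, |w² + 2 − |w|²|² < 4(1 − α²)}` equals `π(1 − α)`. -/
theorem area_of_region (α : ℝ) (hα0 : 0 < α) (hα1 : α < 1) :
    MeasureTheory.volume
        {w : ℂ | 0 < w.im ∧ ‖w‖ < Real.sqrt 2 ∧
          (‖w ^ 2 + 2 - ((‖w‖ ^ 2 : ℝ) : ℂ)‖) ^ 2 < 4 * (1 - α ^ 2)} =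
      ENNReal.ofReal (π * (1 - α)) := by
  have hα2 : (0:ℝ) < 1 - α^2 := by nlinarith
  set β := Real.sqrt (1 - α^2) with hβ
  have hβ2 : β^2 = 1 - α^2 := Real.sq_sqrt hα2.le
  have hβpos : 0 < β := Real.sqrt_pos.2 hα2
  have hβ1 : β < 1 := by nlinarith
  set a := Real.sqrt (1-β) with ha
  set b := Real.sqrt (1+β) with hb
  have ha2 : a^2 = 1 - β := Real.sq_sqrt (by linarith)
  have hb2 : b^2 = 1 + β := Real.sq_sqrt (by linarith)
  have hapos : 0 < a := Real.sqrt_pos.2 (by linarith)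
  have hbpos : 0 < b := Real.sqrt_pos.2 (by linarith)
  have hab : a ≤ b := Real.sqrt_le_sqrt (by linarith)
  set g : ℝ → ℝ := fun y => Real.sqrt (β^2 - (y^2-1)^2) / y with hg
  have hgmeas : Measurable g := by fun_prop
  set R := regionBetween (fun y => -(g y)) g (Set.Ioo a b) with hR
  have hRmeas : MeasurableSet R :=
    measurableSet_regionBetween hgmeas.neg hgmeas measurableSet_Ioo
  -- the set equality
  have hset : {w : ℂ | 0 < w.im ∧ ‖w‖ < Real.sqrt 2 ∧
          (‖w ^ 2 + 2 - ((‖w‖ ^ 2 : ℝ) : ℂ)‖) ^ 2 < 4 * (1 - α ^ 2)}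
      = Complex.measurableEquivRealProd ⁻¹' (Prod.swap ⁻¹' R) := by
    ext w
    set x := w.re with hx
    set y := w.im with hy
    have habs : (‖w‖)^2 = x^2+y^2 := by
      rw [Complex.sq_norm, Complex.normSq_apply]; ring
    have hz : (‖w ^ 2 + 2 - ((‖w‖ ^ 2 : ℝ) : ℂ)‖)^2
        = (2-2*y^2)^2 + (2*x*y)^2 := by
      rw [Complex.sq_norm, Complex.normSq_apply]
      simp only [Complex.sub_re, Complex.add_re, Complex.ofReal_re, Complex.sub_im,
        Complex.add_im, Complex.ofReal_im, pow_two, Complex.mul_re, Complex.mul_im,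
        Complex.re_ofNat, Complex.im_ofNat, habs]
      ring
    have hlt2 : ‖w‖ < Real.sqrt 2 ↔ x^2+y^2 < 2 := by
      rw [show ‖w‖ = Real.sqrt (x^2+y^2) by
        rw [Complex.norm_def, Complex.normSq_apply, ← hx, ← hy]; ring_nf]
      rw [Real.sqrt_lt_sqrt_iff (by positivity)]
    simp only [Set.mem_setOf_eq, Set.mem_preimage, Complex.measurableEquivRealProd_apply,
      Prod.swap_prod_mk, hR, regionBetween, Set.mem_Ioo, ← hx, ← hy, hz, hlt2]
    constructor
    · rintro ⟨hy0, h2, h3⟩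
      have hkey : (1-y^2)^2 + x^2*y^2 < β^2 := by nlinarith
      have hD' : x^2*y^2 < β^2 - (y^2-1)^2 := by nlinarith
      have hDpos : 0 < β^2 - (y^2-1)^2 := by nlinarith [sq_nonneg (x*y)]
      have hy2a : 1 - β < y^2 := by nlinarith [sq_nonneg (x*y), hβpos]
      have hy2b : y^2 < 1 + β := by nlinarith [sq_nonneg (x*y), hβpos]
      have hya : a < y := by nlinarith [ha2, hapos]
      have hyb : y < b := by nlinarith [hb2, hbpos]
      have hg2 : (g y)^2 = (β^2 - (y^2-1)^2)/y^2 := by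
        rw [hg]; simp only; rw [div_pow, Real.sq_sqrt hDpos.le]
      have hgpos : 0 < g y := by
        rw [hg]; exact div_pos (Real.sqrt_pos.2 hDpos) hy0
      have hx2 : x^2 < (g y)^2 := by
        rw [hg2, lt_div_iff₀ (by positivity)]; nlinarith
      refine ⟨⟨hya, hyb⟩, ?_, ?_⟩
      · nlinarith [hx2, hgpos]
      · nlinarith [hx2, hgpos]
    · rintro ⟨⟨hya, hyb⟩, hx1, hx2⟩
      have hy0 : 0 < y := lt_trans hapos hya
      have hy2a : 1 - β < y^2 := by nlinarith [ha2, hapos]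
      have hy2b : y^2 < 1 + β := by nlinarith [hb2, hbpos, hy0]
      have hDpos : 0 < β^2 - (y^2-1)^2 := by nlinarith
      have hg2 : (g y)^2 = (β^2 - (y^2-1)^2)/y^2 := by
        rw [hg]; simp only; rw [div_pow, Real.sq_sqrt hDpos.le]
      have hxg : x^2 < (g y)^2 := by nlinarith [hx1, hx2]
      have hxyD : x^2*y^2 < β^2 - (y^2-1)^2 := by
        rw [hg2, lt_div_iff₀ (by positivity)] at hxg; nlinarith [hxg]
      refine ⟨hy0, ?_, ?_⟩
      · have hD2 : x^2*y^2 < 2*y^2 - y^4 := by nlinarith [hβ2, hα0, hxyD]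
        nlinarith [hD2, mul_pos hy0 hy0]
      · nlinarith [hxyD, hβ2]
  rw [hset]
  rw [Complex.volume_preserving_equiv_real_prod.measure_preimage
    (hRmeas.preimage measurable_swap).nullMeasurableSet]
  rw [show (volume : Measure (ℝ × ℝ)) = (volume : Measure ℝ).prod (volume : Measure ℝ) from rfl]
  rw [MeasureTheory.Measure.measurePreserving_swap.measure_preimage hRmeas.nullMeasurableSet]
  have hg_cont : ContinuousOn g (Set.Icc a b) := by
    rw [hg]
    apply ContinuousOn.div (ContinuousOn.sqrt (by fun_prop)) (by fun_prop)
    intro y hy; exact (lt_of_lt_of_le hapos hy.1).ne'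
  have hg_int : IntegrableOn g (Set.Ioo a b) volume :=
    (hg_cont.integrableOn_Icc).mono_set Set.Ioo_subset_Icc_self
  have hgnn : ∀ y ∈ Set.Ioo a b, 0 ≤ g y := by
    intro y hy
    have : 0 < y := lt_trans hapos hy.1
    rw [hg]
    positivity
  have hgneg_int : IntegrableOn (fun y => -(g y)) (Set.Ioo a b) volume := hg_int.neg
  rw [hR, volume_regionBetween_eq_integral hgneg_int hg_int measurableSet_Ioo
    (fun y hy => by nlinarith [hgnn y hy])]
  congr 1
  have : ∀ y ∈ Set.Ioo a b, (g - fun y => -(g y)) y = 2 * (Real.sqrt (β^2 - (y^2-1)^2) / y) := by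
    intro y hy
    simp only [Pi.sub_apply, hg]
    ring
  rw [MeasureTheory.setIntegral_congr_fun measurableSet_Ioo this]
  rw [← MeasureTheory.integral_Ioc_eq_integral_Ioo,
    ← intervalIntegral.integral_of_le hab]
  exact key_integral α β hα0 hα1 hβ
end

section
/- Let 0 < r < 1, let k, m be natural numbers, let θ ∈ ℝ, x ∈ S^k ⊂ ℝ^{k+1}, y ∈ S^m ⊂ ℝ^{m+1}, and set ζ = √(2 − 2r)·e^{−iθ} ∈ ℂ and w = (ix, y) ∈ ℂ^{k+m+2}. Then |ζ|² = 2 − 2r, and: e^{iθ}·√(1 − |ζ|²/4)·ζ = √(1 − r²), and e^{iθ}·((1 − |ζ|²/4)·w − (ζ²/4)·w̄) = ((−r·sinθ + i·cosθ)·x, (r·cosθ + i·sinθ)·y), where w̄ denotes the componentwise complex conjugate. -/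
/-- The computational core of Proposition 6.1: for `0 < r < 1`, `x ∈ S^k`, `y ∈ S^m`,
setting `ζ = √(2−2r)·e^{−iθ}` and `w = (ix, y) ∈ ℂ^{k+m+2}`, one has `|ζ|² = 2 − 2r`,
`e^{iθ}·√(1 − |ζ|²/4)·ζ = √(1 − r²)`, and
`e^{iθ}·((1 − |ζ|²/4)·w − (ζ²/4)·w̄) = ((−r sinθ + i cosθ)·x, (r cosθ + i sinθ)·y)`. -/
theorem prop_6_1_core (r : ℝ) (hr0 : 0 < r) (hr1 : r < 1) (k m : ℕ) (θ : ℝ)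
    (x : EuclideanSpace ℝ (Fin (k + 1))) (y : EuclideanSpace ℝ (Fin (m + 1)))
    (hx : ‖x‖ = 1) (hy : ‖y‖ = 1)
    (ζ : ℂ) (hζ : ζ = (Real.sqrt (2 - 2 * r) : ℝ) * Complex.exp (-(θ : ℂ) * Complex.I))
    (w : Fin (k + 1) ⊕ Fin (m + 1) → ℂ)
    (hw : w = Sum.elim (fun a => Complex.I * (x a : ℝ)) (fun b => ((y b : ℝ) : ℂ))) :
    ‖ζ‖ ^ 2 = 2 - 2 * r ∧
    Complex.exp ((θ : ℂ) * Complex.I) *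
        ((Real.sqrt (1 - ‖ζ‖ ^ 2 / 4) : ℝ) * ζ) =
      ((Real.sqrt (1 - r ^ 2) : ℝ) : ℂ) ∧
    ∀ i, Complex.exp ((θ : ℂ) * Complex.I) *
        (((1 - ‖ζ‖ ^ 2 / 4 : ℝ) : ℂ) * w i - ζ ^ 2 / 4 * (starRingEnd ℂ) (w i)) =
      Sum.elim
        (fun a => (((-r * Real.sin θ : ℝ) : ℂ) + ((Real.cos θ : ℝ) : ℂ) * Complex.I) * (x a : ℝ))
        (fun b => (((r * Real.cos θ : ℝ) : ℂ) + ((Real.sin θ : ℝ) : ℂ) * Complex.I) * (y b : ℝ))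
        i := by
  have h2r : (0:ℝ) ≤ 2 - 2 * r := by linarith
  have hs : Real.sqrt (2 - 2 * r) ^ 2 = 2 - 2 * r := Real.sq_sqrt h2r
  have hee : Complex.exp ((θ:ℂ) * Complex.I) * Complex.exp (-(θ:ℂ) * Complex.I) = 1 := by
    rw [← Complex.exp_add]; norm_num
  have habs : ‖ζ‖ ^ 2 = 2 - 2 * r := by
    rw [hζ]
    rw [norm_mul, Complex.norm_exp]
    simp [Complex.norm_real, abs_of_nonneg (Real.sqrt_nonneg _), hs]
  refine ⟨habs, ?_, ?_⟩
  · rw [habs, hζ]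
    have : Complex.exp ((θ:ℂ) * Complex.I) *
        ((Real.sqrt (1 - (2 - 2*r) / 4) : ℝ) * ((Real.sqrt (2 - 2*r) : ℝ) *
          Complex.exp (-(θ:ℂ) * Complex.I))) =
        ((Real.sqrt (1 - (2 - 2*r) / 4) * Real.sqrt (2 - 2*r) : ℝ) : ℂ) *
          (Complex.exp ((θ:ℂ) * Complex.I) * Complex.exp (-(θ:ℂ) * Complex.I)) := by
      push_cast; ring
    rw [this, hee, mul_one, ← Real.sqrt_mul (by nlinarith)]
    norm_num
    ring_nf
  · intro i
    have key : Complex.cos θ ^ 2 + Complex.sin θ ^ 2 = 1 := Complex.cos_sq_add_sin_sq θ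
    have hsq : ((Real.sqrt (2 - 2*r) : ℝ) : ℂ) ^ 2 = 2 - 2*(r:ℂ) := by
      rw [← Complex.ofReal_pow, hs]; push_cast; ring
    rw [habs, hζ, hw]
    cases i with
    | inl a =>
      simp only [Sum.elim_inl, map_mul, Complex.conj_I, Complex.conj_ofReal]
      rw [Complex.exp_mul_I, Complex.exp_mul_I, Complex.cos_neg, Complex.sin_neg]
      push_cast [Complex.ofReal_cos, Complex.ofReal_sin]
      linear_combination (Complex.I * (x a) * ((1-r)/2) *
        (Complex.cos θ - Complex.sin θ * Complex.I)) * key +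
        ((Complex.cos θ + Complex.sin θ * Complex.I) *
          (Complex.cos θ - Complex.sin θ * Complex.I)^2 * Complex.I * (x a) / 4) * hsq +
        (Complex.cos θ * Complex.sin θ^2 * Complex.I * (x a) * ((r-1)/2) +
         Complex.sin θ * r * (x a) +
         Complex.sin θ^3 * (x a) * ((1-r)/2) * Complex.I^2) * Complex.I_sq
    | inr b =>
      simp only [Sum.elim_inr, Complex.conj_ofReal]
      rw [Complex.exp_mul_I, Complex.exp_mul_I, Complex.cos_neg, Complex.sin_neg]
      push_cast [Complex.ofReal_cos, Complex.ofReal_sin]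
      linear_combination (-(y b) * ((1-r)/2) *
        (Complex.cos θ - Complex.sin θ * Complex.I)) * key +
        (-(Complex.cos θ + Complex.sin θ * Complex.I) *
          (Complex.cos θ - Complex.sin θ * Complex.I)^2 * (y b) / 4) * hsq +
        (Complex.cos θ * Complex.sin θ^2 * (y b) * ((1-r)/2) +
         Complex.sin θ^3 * Complex.I * (y b) * ((r-1)/2)) * Complex.I_sq
end

section
/- Let n ≥ 1, let w ∈ ℂⁿ satisfy ∑_j w_j² = 0 and ∑_j |w_j|² = 2, and let ζ ∈ ℂ with |ζ| < √2. Define z ∈ ℂ^{n+1} by z₀ = √(1 − |ζ|²/4)·ζ and (z₁, …, z_n) = (1 − |ζ|²/4)·w − (ζ²/4)·w̄, where w̄ is the componentwise complex conjugate. Then ∑_{j=0}^{n} |z_j|² = 2 and ∑_{j=0}^{n} z_j² = 0. -/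
/-- The disk-bundle map `Θ_Q` of Section 4.2 takes values in the quadric: if
`w ∈ ℂⁿ` satisfies `∑ w_j² = 0` and `∑ |w_j|² = 2` and `|ζ| < √2`, then the vector
`z = (√(1 − |ζ|²/4)·ζ, (1 − |ζ|²/4)·w − (ζ²/4)·w̄) ∈ ℂ^{n+1}` satisfies
`∑ |z_j|² = 2` and `∑ z_j² = 0`. -/
theorem theta_Q_lands_in_quadric (n : ℕ) (hn : 1 ≤ n) (w : Fin n → ℂ)
    (hw2 : ∑ j, (w j) ^ 2 = 0) (hwnorm : ∑ j, ‖w j‖ ^ 2 = 2)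
    (ζ : ℂ) (hζ : ‖ζ‖ < Real.sqrt 2)
    (z : Fin (n + 1) → ℂ)
    (hz : z = Fin.cons (((Real.sqrt (1 - ‖ζ‖ ^ 2 / 4) : ℝ) : ℂ) * ζ)
      (fun j => ((1 - ‖ζ‖ ^ 2 / 4 : ℂ)) * w j - ζ ^ 2 / 4 * (starRingEnd ℂ) (w j))) :
    (∑ j, ‖z j‖ ^ 2) = 2 ∧ (∑ j, (z j) ^ 2) = 0 := by
  subst hz
  have habs : ‖ζ‖ ^ 2 < 2 := by
    nlinarith [Real.sq_sqrt (show (0:ℝ) ≤ 2 by norm_num), norm_nonneg ζ,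
      Real.sqrt_nonneg 2]
  have ha : (0:ℝ) ≤ 1 - ‖ζ‖ ^ 2 / 4 := by nlinarith [norm_nonneg ζ]
  have hsq : (((Real.sqrt (1 - ‖ζ‖ ^ 2 / 4) : ℝ) : ℂ)) ^ 2
      = 1 - (‖ζ‖ : ℂ) ^ 2 / 4 := by
    rw [← Complex.ofReal_pow, Real.sq_sqrt ha]
    push_cast
    ring
  have hzc : ζ * (starRingEnd ℂ) ζ = (‖ζ‖ : ℂ) ^ 2 := by
    rw [Complex.mul_conj, Complex.normSq_eq_norm_sq]
    push_cast
    ring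
  have key : ∀ u : ℂ, ((‖u‖ ^ 2 : ℝ) : ℂ) = u * (starRingEnd ℂ) u := fun u => by
    rw [Complex.mul_conj, Complex.normSq_eq_norm_sq]
  have hconj2 : ∑ j, ((starRingEnd ℂ) (w j)) ^ 2 = 0 := by
    have := congrArg (starRingEnd ℂ) hw2
    simpa [map_sum] using this
  have hmix : ∑ j, w j * (starRingEnd ℂ) (w j) = 2 := by
    have h : ((∑ j, ‖w j‖ ^ 2 : ℝ) : ℂ) = 2 := by rw [hwnorm]; norm_num
    rw [Complex.ofReal_sum] at h
    rw [← h]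
    exact Finset.sum_congr rfl fun j _ => (key (w j)).symm
  constructor
  · have h : ((∑ j, ‖(Fin.cons (((Real.sqrt (1 - ‖ζ‖ ^ 2 / 4) : ℝ) : ℂ) * ζ)
      (fun j => ((1 - ‖ζ‖ ^ 2 / 4 : ℂ)) * w j - ζ ^ 2 / 4 * (starRingEnd ℂ) (w j)) : Fin (n+1) → ℂ) j‖ ^ 2 : ℝ) : ℂ) = 2 := by
      rw [Complex.ofReal_sum]
      rw [Finset.sum_congr rfl fun j _ => key _]
      rw [Fin.sum_univ_succ]
      simp only [Fin.cons_zero, Fin.cons_succ]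
      simp only [map_mul, map_sub, map_div₀, map_pow, Complex.conj_ofReal, map_one, map_ofNat,
        Complex.conj_conj, map_sub, map_one]
      have expand : ∑ j, ((1 - (‖ζ‖ : ℂ) ^ 2 / 4) * w j - ζ ^ 2 / 4 * (starRingEnd ℂ) (w j))
          * ((1 - (‖ζ‖ : ℂ) ^ 2 / 4) * (starRingEnd ℂ) (w j) - (starRingEnd ℂ) ζ ^ 2 / 4 * w j)
          = ((1 - (‖ζ‖ : ℂ) ^ 2 / 4) ^ 2 + ζ ^ 2 * (starRingEnd ℂ) ζ ^ 2 / 16)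
              * (∑ j, w j * (starRingEnd ℂ) (w j))
            - (1 - (‖ζ‖ : ℂ) ^ 2 / 4) * ((starRingEnd ℂ) ζ ^ 2 / 4) * (∑ j, (w j) ^ 2)
            - (1 - (‖ζ‖ : ℂ) ^ 2 / 4) * (ζ ^ 2 / 4) * (∑ j, ((starRingEnd ℂ) (w j)) ^ 2) := by
        rw [Finset.mul_sum, Finset.mul_sum, Finset.mul_sum, ← Finset.sum_sub_distrib,
          ← Finset.sum_sub_distrib]
        exact Finset.sum_congr rfl fun j _ => by ring
      rw [expand, hw2, hconj2, hmix]
      linear_combination (ζ * (starRingEnd ℂ) ζ) * hsq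
        + ((1 - (‖ζ‖ : ℂ) ^ 2 / 4) + (ζ * (starRingEnd ℂ) ζ + (‖ζ‖ : ℂ) ^ 2) / 8) * hzc
    exact_mod_cast h
  · rw [Fin.sum_univ_succ]
    simp only [Fin.cons_zero, Fin.cons_succ]
    have expand : ∑ j, (((1 - (‖ζ‖ : ℂ) ^ 2 / 4)) * w j - ζ ^ 2 / 4 * (starRingEnd ℂ) (w j)) ^ 2
        = (1 - (‖ζ‖ : ℂ) ^ 2 / 4) ^ 2 * (∑ j, (w j) ^ 2)
          + (ζ ^ 2 / 4) ^ 2 * (∑ j, ((starRingEnd ℂ) (w j)) ^ 2)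
          - (1 - (‖ζ‖ : ℂ) ^ 2 / 4) * (ζ ^ 2 / 2) * (∑ j, w j * (starRingEnd ℂ) (w j)) := by
      rw [Finset.mul_sum, Finset.mul_sum, Finset.mul_sum, ← Finset.sum_add_distrib,
        ← Finset.sum_sub_distrib]
      exact Finset.sum_congr rfl fun j _ => by ring
    rw [expand, hw2, hconj2, hmix]
    linear_combination ζ ^ 2 * hsq
end

section
/- Let n ≥ 1, let w ∈ ℂⁿ satisfy ∑_j w_j² = 0 and ∑_j |w_j|² = 2, and let ζ ∈ ℂ with |ζ| < 1. Define z ∈ ℂⁿ by z = √(1 − |ζ|²/2)·w − (ζ/√2)·w̄, where w̄ is the componentwise complex conjugate. Then ∑_j |z_j|² = 2 and (1/2)·√(4 − |∑_j z_j²|²) = 1 − |ζ|². -/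
/-- The core computation of Proposition 7.3: if `w ∈ ℂⁿ` satisfies `∑ w_j² = 0` and
`∑ |w_j|² = 2` and `|ζ| < 1`, then `z = √(1 − |ζ|²/2)·w − (ζ/√2)·w̄` satisfies
`∑ |z_j|² = 2` and `(1/2)·√(4 − |∑ z_j²|²) = 1 − |ζ|²`. -/
theorem theta_p_moment_map_norm (n : ℕ) (hn : 1 ≤ n) (w : Fin n → ℂ)
    (hw2 : ∑ j, (w j) ^ 2 = 0) (hwnorm : ∑ j, ‖w j‖ ^ 2 = 2)
    (ζ : ℂ) (hζ : ‖ζ‖ < 1)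
    (z : Fin n → ℂ)
    (hz : z = fun j => ((Real.sqrt (1 - ‖ζ‖ ^ 2 / 2) : ℝ) : ℂ) * w j -
      ζ / ((Real.sqrt 2 : ℝ) : ℂ) * (starRingEnd ℂ) (w j)) :
    (∑ j, ‖z j‖ ^ 2) = 2 ∧
    (1 / 2) * Real.sqrt (4 - ‖∑ j, (z j) ^ 2‖ ^ 2) = 1 - ‖ζ‖ ^ 2 := by
  set t : ℝ := ‖ζ‖ with ht
  have ht0 : 0 ≤ t := norm_nonneg ζ
  have ht1 : t ^ 2 < 1 := by nlinarith
  have ha0 : (0:ℝ) ≤ 1 - t ^ 2 / 2 := by nlinarith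
  set a : ℝ := Real.sqrt (1 - t ^ 2 / 2) with haa
  have ha2 : a ^ 2 = 1 - t ^ 2 / 2 := Real.sq_sqrt ha0
  have ha0' : 0 ≤ a := Real.sqrt_nonneg _
  have hs2 : (0:ℝ) < Real.sqrt 2 := Real.sqrt_pos.mpr (by norm_num)
  have hs2sq : (Real.sqrt 2) ^ 2 = 2 := Real.sq_sqrt (by norm_num)
  -- complex versions
  set A : ℂ := (a : ℂ) with hA
  set B : ℂ := ζ / ((Real.sqrt 2 : ℝ) : ℂ) with hB
  have hA2 : A ^ 2 = ((1 - t ^ 2 / 2 : ℝ) : ℂ) := by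
    rw [hA, ← Complex.ofReal_pow, ha2]
  -- key complex sums
  have hwc2 : ∑ j, ((starRingEnd ℂ) (w j)) ^ 2 = 0 := by
    have := congrArg (starRingEnd ℂ) hw2
    simpa [map_sum] using this
  have hww : ∑ j, w j * (starRingEnd ℂ) (w j) = 2 := by
    have : ∑ j, w j * (starRingEnd ℂ) (w j) = ((∑ j, ‖w j‖ ^ 2 : ℝ) : ℂ) := by
      push_cast
      refine Finset.sum_congr rfl fun j _ => ?_
      rw [Complex.mul_conj]
      rw [Complex.normSq_eq_norm_sq]
      push_cast
      norm_cast
    rw [this, hwnorm]; norm_num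
  -- first claim, as complex sum
  have hzform : ∀ j, z j = A * w j - B * (starRingEnd ℂ) (w j) := by
    intro j; rw [hz]
  have hsum1 : ∑ j, z j * (starRingEnd ℂ) (z j)
      = A * A * (∑ j, w j * (starRingEnd ℂ) (w j))
        - A * (starRingEnd ℂ) B * (∑ j, (w j) ^ 2)
        - A * B * (∑ j, ((starRingEnd ℂ) (w j)) ^ 2)
        + B * (starRingEnd ℂ) B * (∑ j, w j * (starRingEnd ℂ) (w j)) := by
    simp only [Finset.mul_sum, ← Finset.sum_sub_distrib, ← Finset.sum_add_distrib]
    refine Finset.sum_congr rfl fun j _ => ?_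
    rw [hzform j]
    simp only [map_sub, map_mul, Complex.conj_conj]
    have : (starRingEnd ℂ) A = A := Complex.conj_ofReal a
    rw [this]; ring
  have hBB : B * (starRingEnd ℂ) B = ((t ^ 2 / 2 : ℝ) : ℂ) := by
    rw [hB, map_div₀, Complex.conj_ofReal, div_mul_div_comm, Complex.mul_conj,
      Complex.normSq_eq_norm_sq, ← Complex.ofReal_mul, Real.mul_self_sqrt (by norm_num : (0:ℝ) ≤ 2)]
    push_cast
    rw [← ht]
  have hsum1' : ∑ j, z j * (starRingEnd ℂ) (z j) = 2 := by
    rw [hsum1, hw2, hwc2, hww, hBB]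
    have : A * A = ((1 - t ^ 2 / 2 : ℝ) : ℂ) := by rw [← sq]; exact hA2
    rw [this]; push_cast; ring
  have part1 : (∑ j, ‖z j‖ ^ 2) = 2 := by
    have : ((∑ j, ‖z j‖ ^ 2 : ℝ) : ℂ) = ∑ j, z j * (starRingEnd ℂ) (z j) := by
      push_cast
      refine (Finset.sum_congr rfl fun j _ => ?_).symm
      rw [Complex.mul_conj, Complex.normSq_eq_norm_sq]
      push_cast
      norm_cast
    have h2 : ((∑ j, ‖z j‖ ^ 2 : ℝ) : ℂ) = (2:ℂ) := by rw [this, hsum1']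
    exact_mod_cast h2
  refine ⟨part1, ?_⟩
  -- second claim
  have hzz : ∑ j, (z j) ^ 2 = -(4 * A * B) := by
    have expand : ∑ j, (z j) ^ 2
        = A ^ 2 * (∑ j, (w j) ^ 2) + B ^ 2 * (∑ j, ((starRingEnd ℂ) (w j)) ^ 2)
          - 2 * A * B * (∑ j, w j * (starRingEnd ℂ) (w j)) := by
      simp only [Finset.mul_sum, ← Finset.sum_sub_distrib, ← Finset.sum_add_distrib]
      refine Finset.sum_congr rfl fun j _ => ?_
      rw [hzform j]; ring
    rw [expand, hw2, hwc2, hww]; ring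
  have habs : ‖∑ j, (z j) ^ 2‖ ^ 2 = 8 * t ^ 2 - 4 * t ^ 4 := by
    rw [hzz]
    rw [norm_neg, norm_mul, norm_mul, hA, hB, norm_div, Complex.norm_real, Real.norm_eq_abs,
      Complex.norm_real, Real.norm_eq_abs, abs_of_nonneg ha0', abs_of_nonneg hs2.le, ← ht]
    have h4 : ‖(4:ℂ)‖ = 4 := by simp
    rw [h4, mul_pow, mul_pow, div_pow, ha2, hs2sq]
    ring
  rw [habs]
  have hkey : (4 : ℝ) - (8 * t ^ 2 - 4 * t ^ 4) = (2 * (1 - t ^ 2)) ^ 2 := by ring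
  rw [hkey, Real.sqrt_sq (by nlinarith : (0:ℝ) ≤ 2 * (1 - t ^ 2))]
  ring
end

section
/- Let ε₁, ε₂, ε₃, ε₄, ε₅ ∈ {−1, 1} and define 𝒲 on triples of nonzero complex numbers by 𝒲(x, y, z) = z⁻¹·(ε₁·x + ε₂·x·y⁻¹ + ε₃·x⁻¹·y + ε₄·x⁻¹) + ε₅·z. Suppose x, y, z ∈ ℂ are nonzero and satisfy x² = ε₁ε₄, y² = ε₁ε₂ε₃ε₄, y ≠ −ε₁ε₂, and z² = 2ε₄ε₅·(y + ε₁ε₂)/(x·y). Then (x, y, z) is a critical point of 𝒲: the complex derivatives at x, y, z respectively of the three functions t ↦ 𝒲(t, y, z), t ↦ 𝒲(x, t, z), and t ↦ 𝒲(x, y, t) all vanish. -/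
/-- The critical-point computation in Corollary 8.6 for the superpotential
`𝒲(x, y, z) = z⁻¹(ε₁x + ε₂xy⁻¹ + ε₃x⁻¹y + ε₄x⁻¹) + ε₅z` of the Lagrangian torus
`L₁,₁ᴾ ⊂ ℂP³(√2)`: any nonzero `(x, y, z)` with `x² = ε₁ε₄`, `y² = ε₁ε₂ε₃ε₄`,
`y ≠ −ε₁ε₂` and `z² = 2ε₄ε₅(y + ε₁ε₂)/(xy)` is a critical point of `𝒲`. -/
theorem superpotential_critical_point
    (ε₁ ε₂ ε₃ ε₄ ε₅ : ℂ)
    (h₁ : ε₁ = 1 ∨ ε₁ = -1) (h₂ : ε₂ = 1 ∨ ε₂ = -1) (h₃ : ε₃ = 1 ∨ ε₃ = -1)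
    (h₄ : ε₄ = 1 ∨ ε₄ = -1) (h₅ : ε₅ = 1 ∨ ε₅ = -1)
    (x y z : ℂ) (hx : x ≠ 0) (hy : y ≠ 0) (hz : z ≠ 0)
    (hx2 : x ^ 2 = ε₁ * ε₄) (hy2 : y ^ 2 = ε₁ * ε₂ * ε₃ * ε₄)
    (hyne : y ≠ -(ε₁ * ε₂))
    (hz2 : z ^ 2 = 2 * ε₄ * ε₅ * (y + ε₁ * ε₂) / (x * y)) :
    HasDerivAt
      (fun t : ℂ => z⁻¹ * (ε₁ * t + ε₂ * t * y⁻¹ + ε₃ * t⁻¹ * y + ε₄ * t⁻¹) + ε₅ * z) 0 x ∧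
    HasDerivAt
      (fun t : ℂ => z⁻¹ * (ε₁ * x + ε₂ * x * t⁻¹ + ε₃ * x⁻¹ * t + ε₄ * x⁻¹) + ε₅ * z) 0 y ∧
    HasDerivAt
      (fun t : ℂ => t⁻¹ * (ε₁ * x + ε₂ * x * y⁻¹ + ε₃ * x⁻¹ * y + ε₄ * x⁻¹) + ε₅ * t) 0 z := by
  have e1 : ε₁ ^ 2 = 1 := by rcases h₁ with h | h <;> rw [h] <;> ring
  have e2 : ε₂ ^ 2 = 1 := by rcases h₂ with h | h <;> rw [h] <;> ring
  have e3 : ε₃ ^ 2 = 1 := by rcases h₃ with h | h <;> rw [h] <;> ring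
  have e4 : ε₄ ^ 2 = 1 := by rcases h₄ with h | h <;> rw [h] <;> ring
  have e5 : ε₅ ^ 2 = 1 := by rcases h₅ with h | h <;> rw [h] <;> ring
  have hz2' : z ^ 2 * (x * y) = 2 * ε₄ * ε₅ * (y + ε₁ * ε₂) := by
    rw [hz2]; field_simp
  refine ⟨?_, ?_, ?_⟩
  · have h := ((((((hasDerivAt_id x).const_mul ε₁).add
        (((hasDerivAt_id x).const_mul ε₂).mul_const y⁻¹)).add
        (((hasDerivAt_inv hx).const_mul ε₃).mul_const y)).add
        ((hasDerivAt_inv hx).const_mul ε₄)).const_mul z⁻¹).add_const (ε₅ * z)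
    simp only [id_eq] at h
    have key : z⁻¹ * (ε₁ * 1 + ε₂ * 1 * y⁻¹ + ε₃ * -(x ^ 2)⁻¹ * y + ε₄ * -(x ^ 2)⁻¹) = 0 := by
      field_simp
      linear_combination ((ε₁*y+ε₂)*(x^2+ε₁*ε₄) - y*ε₄ - ε₁*ε₂*ε₃^2*ε₄)*hx2 - ε₃*x^2*hy2
        + ((ε₁*y+ε₂)*ε₄^2 - ε₂*ε₃^2*ε₄^2)*e1 - ε₂*ε₄^2*e3
        + (x^2-1)*(ε₃*hy2 - (ε₁*y+ε₂)*hx2 + ε₁*ε₂*ε₄*e3 - ε₄*y*e1)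
    rw [key] at h
    exact h
  · have h := (((((hasDerivAt_const y (ε₁ * x)).add
        ((hasDerivAt_inv hy).const_mul (ε₂ * x))).add
        ((hasDerivAt_id y).const_mul (ε₃ * x⁻¹))).add
        (hasDerivAt_const y (ε₄ * x⁻¹))).const_mul z⁻¹).add_const (ε₅ * z)
    simp only [id_eq] at h
    have key : z⁻¹ * (0 + ε₂ * x * -(y ^ 2)⁻¹ + ε₃ * x⁻¹ * 1 + 0) = 0 := by
      field_simp
      linear_combination ε₃*hy2 - ε₂*hx2 + ε₁*ε₂*ε₄*e3
    rw [key] at h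
    exact h
  · have h := ((hasDerivAt_inv hz).mul_const
        (ε₁ * x + ε₂ * x * y⁻¹ + ε₃ * x⁻¹ * y + ε₄ * x⁻¹)).add
        ((hasDerivAt_id z).const_mul ε₅)
    simp only [id_eq] at h
    have hA : ε₁ * x + ε₂ * x * y⁻¹ + ε₃ * x⁻¹ * y + ε₄ * x⁻¹ = ε₅ * z ^ 2 := by
      field_simp
      linear_combination x*(-ε₅*hz2' + 2*ε₄*(y+ε₁*ε₂)*e5 + y*ε₁*hx2 + y*ε₄*e1
        + ε₂*hx2 + ε₃*hy2 + ε₁*ε₂*ε₄*e3) - 4*x*ε₄*(ε₁*ε₂+y)*e5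
        + (1-x)*(ε₃*hy2 + ε₁*y*hx2 + ε₂*hx2 - ε₅*hz2' + ε₁*ε₂*ε₄*e3 + ε₄*y*e1 - 2*ε₄*(y+ε₁*ε₂)*e5)
    have key : -(z ^ 2)⁻¹ * (ε₁ * x + ε₂ * x * y⁻¹ + ε₃ * x⁻¹ * y + ε₄ * x⁻¹) + ε₅ * 1 = 0 := by
      rw [hA]
      have hz2ne : (z : ℂ) ^ 2 ≠ 0 := pow_ne_zero 2 hz
      field_simp
      ring
    rw [key] at h
    exact h
end
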